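/- Suppose a configuration C satisfies Tree Initially and a configuration C' is obtained from C by performing an applicable Add, Insert, Jump, LeafSwap, or MixSwap. Define |E| = Σ_{i∈ℛ} |E_i|, Y = Σ_{u∈V} Σ_{i∈ℛ} min(L_i(u), N), and S = Σ_{u∈V} u · (Σ_{i∈ℛ} i · d_i(u)). Then either |E(C')| ≥ |E(C)| + 1, or (|E(C')| = |E(C)| and Y(C') ≤ Y(C) − 1), or (|E(C')| = |E(C)|, Y(C') = Y(C), and S(C') ≥ S(C) + 1); that is, the triple (−|E|, Y, −S) strictly decreases lexicographically. -/

import Mathlib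

namespace P2P

/-- A walk of length `n` from `r` to `u` in the edge set `E`. -/
def Walk {α : Type*} (E : Finset (α × α)) (r u : α) (n : ℕ) : Prop :=
  ∃ f : ℕ → α, f 0 = r ∧ f n = u ∧ ∀ k < n, (f k, f (k + 1)) ∈ E

/-- Depth of `u` below root `r`: minimal number of edges of a directed walk
(equivalently, of a directed path) from `r` to `u`; `⊤` if unreachable. -/
noncomputable def depth {α : Type*} (E : Finset (α × α)) (r u : α) : ℕ∞ :=
  sInf {n : ℕ∞ | ∃ m : ℕ, n = (m : ℕ∞) ∧ Walk E r u m}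

/-- Out-degree of `u` in `E`. -/
def outDeg {α : Type*} [DecidableEq α] (E : Finset (α × α)) (u : α) : ℕ :=
  (E.filter fun e => e.1 = u).card

/-- In-degree of `u` in `E`. -/
def inDeg {α : Type*} [DecidableEq α] (E : Finset (α × α)) (u : α) : ℕ :=
  (E.filter fun e => e.2 = u).card

/-- A configuration assigns to each color an edge set. -/
abbrev Cfg := ℕ → Finset (ℕ × ℕ)

/-- The node set `V = {1, …, N}`. -/
def V (N : ℕ) : Finset ℕ := Finset.Icc 1 N

/-- The root set `ℛ = {1, …, M}`. -/
def R (M : ℕ) : Finset ℕ := Finset.Icc 1 M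

/-- `u` has an incoming `i`-edge (root `i` counts its server link). -/
def HasIn (E : Cfg) (i u : ℕ) : Prop := (∃ w, (w, u) ∈ E i) ∨ u = i

/-- Incoming count of `u`: incoming edges of all colors, plus 1 if `u` is a root. -/
def incCount (M : ℕ) (E : Cfg) (u : ℕ) : ℕ :=
  (∑ i ∈ R M, inDeg (E i) u) + (if u ∈ R M then 1 else 0)

/-- Total out-degree `d(u)`. -/
def dtot (M : ℕ) (E : Cfg) (u : ℕ) : ℕ := ∑ i ∈ R M, outDeg (E i) u

/-- Edges are ordered pairs of distinct nodes of `V`. -/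
def ValidEdges (N M : ℕ) (E : Cfg) : Prop :=
  ∀ i ∈ R M, ∀ e ∈ E i, e.1 ∈ V N ∧ e.2 ∈ V N ∧ e.1 ≠ e.2

/-- Assumption (Tree Initially). -/
def TreeInit (N M K : ℕ) (E : Cfg) : Prop :=
  (∀ u ∈ V N, incCount M E u ≤ K) ∧
  (∀ i ∈ R M, ∀ u ∈ V N, inDeg (E i) u ≤ 1) ∧
  (∀ i ∈ R M, inDeg (E i) i = 0)

/-- A node is available if it has spare capacity and some incoming edge. -/
def Available (M : ℕ) (E : Cfg) (dbar : ℕ → ℕ) (v : ℕ) : Prop :=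
  dtot M E v < dbar v ∧ ∃ i ∈ R M, HasIn E i v

/-- An Add is applicable at `(u_p, u, i)`. -/
def AddApp (N M K : ℕ) (E : Cfg) (dbar : ℕ → ℕ) (up u i : ℕ) : Prop :=
  i ∈ R M ∧ up ∈ V N ∧ u ∈ V N ∧
  incCount M E u < K ∧ ¬ HasIn E i u ∧ HasIn E i up ∧ dtot M E up < dbar up

/-- An Insert is applicable at `(u_p, u, i)` with `i`-child `u_c` of `u_p`. -/
def InsertApp (N M K : ℕ) (E : Cfg) (up u uc i : ℕ) : Prop :=
  i ∈ R M ∧ up ∈ V N ∧ u ∈ V N ∧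
  incCount M E u < K ∧ ¬ HasIn E i u ∧ HasIn E i up ∧ (up, uc) ∈ E i

/-- A Jump is applicable at `(u, v, i)`. -/
def JumpApp (M : ℕ) (E : Cfg) (dbar : ℕ → ℕ) (u v i : ℕ) : Prop :=
  i ∈ R M ∧ (∃ up, (up, u) ∈ E i) ∧ Available M E dbar v ∧ HasIn E i v ∧
  depth (E i) i v + 1 < depth (E i) i u

/-- A LeafSwap is applicable at `(u, v, i)`. -/
def LeafSwapApp (M : ℕ) (E : Cfg) (u v i : ℕ) : Prop :=
  i ∈ R M ∧ (∃ up, (up, u) ∈ E i) ∧ (∃ vp, (vp, v) ∈ E i) ∧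
  outDeg (E i) v = 0 ∧ 0 < outDeg (E i) u ∧
  depth (E i) i v < depth (E i) i u

/-- A MixSwap is applicable at `(u, u_c, v, v_c, i, j)`. -/
def MixSwapApp (M : ℕ) (E : Cfg) (u uc v vc i j : ℕ) : Prop :=
  i ∈ R M ∧ j ∈ R M ∧ i ≠ j ∧ u ≠ v ∧
  (u, uc) ∈ E i ∧ (v, vc) ∈ E j ∧ uc ≠ v ∧ vc ≠ u ∧
  depth (E i) i v ≤ depth (E i) i u ∧ depth (E j) j u ≤ depth (E j) j v ∧
  ((depth (E i) i u, depth (E j) j u) ≠ (depth (E i) i v, depth (E j) j v) ∨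
    ((u : ℤ) - (v : ℤ)) * ((j : ℤ) - (i : ℤ)) > 0)

/-- Result of performing an Add. -/
def doAdd (E : Cfg) (up u i : ℕ) : Cfg :=
  fun l => if l = i then insert (up, u) (E l) else E l

/-- Result of performing an Insert. -/
def doInsert (E : Cfg) (up u uc i : ℕ) : Cfg :=
  fun l => if l = i then insert (up, u) (insert (u, uc) ((E l).erase (up, uc))) else E l

/-- Result of performing a Jump (parent `u_p` is replaced by `v`). -/
def doJump (E : Cfg) (up u v i : ℕ) : Cfg :=
  fun l => if l = i then insert (v, u) ((E l).erase (up, u)) else E l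

/-- Result of performing a LeafSwap (`u` and `v` exchange parents). -/
def doLeafSwap (E : Cfg) (up u vp v i : ℕ) : Cfg :=
  fun l => if l = i then
    insert (up, v) (insert (vp, u) (((E l).erase (up, u)).erase (vp, v))) else E l

/-- Result of performing a MixSwap (`u` and `v` exchange the children `u_c`, `v_c`). -/
def doMixSwap (E : Cfg) (u uc v vc i j : ℕ) : Cfg :=
  fun l => if l = i then insert (v, uc) ((E l).erase (u, uc))
    else if l = j then insert (u, vc) ((E l).erase (v, vc)) else E l

/-- One step of the algorithm: perform any applicable Add, Insert, Jump,
LeafSwap or MixSwap. -/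
def Step (N M K : ℕ) (dbar : ℕ → ℕ) (E E' : Cfg) : Prop :=
  (∃ up u i, AddApp N M K E dbar up u i ∧ E' = doAdd E up u i) ∨
  (∃ up u uc i, InsertApp N M K E up u uc i ∧ E' = doInsert E up u uc i) ∨
  (∃ up u v i, (up, u) ∈ E i ∧ JumpApp M E dbar u v i ∧ E' = doJump E up u v i) ∨
  (∃ up u vp v i, (up, u) ∈ E i ∧ (vp, v) ∈ E i ∧ LeafSwapApp M E u v i ∧
      E' = doLeafSwap E up u vp v i) ∨
  (∃ u uc v vc i j, MixSwapApp M E u uc v vc i j ∧ E' = doMixSwap E u uc v vc i j)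

/-- Total number of edges `|E|`. -/
def numE (M : ℕ) (E : Cfg) : ℕ := ∑ i ∈ R M, (E i).card

/-- `Y = Σ_u Σ_i min(L_i(u), N)`. -/
noncomputable def Yval (N M : ℕ) (E : Cfg) : ℕ :=
  ∑ u ∈ V N, ∑ i ∈ R M, (min (depth (E i) i u) (N : ℕ∞)).toNat

/-- `S = Σ_u u · Σ_i i · d_i(u)`. -/
def Sval (N M : ℕ) (E : Cfg) : ℕ :=
  ∑ u ∈ V N, u * ∑ i ∈ R M, i * outDeg (E i) u



/-! ### Auxiliary lemmas -/

section Aux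
variable {E E' : Finset (ℕ × ℕ)} {r u v w p q x : ℕ}

lemma walk_refl (E : Finset (ℕ × ℕ)) (r : ℕ) : Walk E r r 0 :=
  ⟨fun _ => r, rfl, rfl, by omega⟩

lemma walk_extend {m : ℕ} (h : Walk E r p m) (he : (p, x) ∈ E) :
    Walk E r x (m + 1) := by
  obtain ⟨f, h0, hm, hE⟩ := h
  refine ⟨fun k => if k ≤ m then f k else x, by simp [h0], by simp, ?_⟩
  intro k hk
  dsimp only
  rcases lt_or_ge k m with hkm | hkm
  · rw [if_pos (le_of_lt hkm), if_pos (Nat.succ_le_of_lt hkm)]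
    exact hE k hkm
  · have hkm' : k = m := by omega
    subst hkm'
    rw [if_pos le_rfl, if_neg (by omega), hm]
    exact he

lemma walk_concat {m n : ℕ} (h1 : Walk E r u m) (h2 : Walk E u w n) :
    Walk E r w (m + n) := by
  obtain ⟨f, hf0, hfm, hfE⟩ := h1
  obtain ⟨g, hg0, hgn, hgE⟩ := h2
  refine ⟨fun k => if k ≤ m then f k else g (k - m), by simp [hf0], ?_, ?_⟩
  · dsimp only
    rcases Nat.eq_zero_or_pos n with hn | hn
    · subst hn
      rw [if_pos (by omega)]
      exact (hfm.trans (hg0.symm.trans hgn))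
    · rw [if_neg (by omega), show m + n - m = n by omega, hgn]
  · intro k hk
    dsimp only
    rcases lt_or_ge k m with hkm | hkm
    · rw [if_pos (le_of_lt hkm), if_pos (Nat.succ_le_of_lt hkm)]
      exact hfE k hkm
    · rcases Nat.eq_or_lt_of_le hkm with hkm' | hkm'
      · have hk2 : k = m := hkm'.symm
        subst hk2
        have hn : 0 < n := by omega
        rw [if_pos le_rfl, if_neg (by omega), show k + 1 - k = 1 by omega,
          hfm, ← hg0]
        exact hgE 0 hn
      · rw [if_neg (by omega), if_neg (by omega),
          show k + 1 - m = (k - m) + 1 by omega]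
        exact hgE (k - m) (by omega)

lemma depth_le_of_walk {n : ℕ} (h : Walk E r u n) : depth E r u ≤ (n : ℕ∞) :=
  sInf_le ⟨n, rfl, h⟩

lemma depth_eq_top (h : ¬ ∃ n, Walk E r u n) : depth E r u = ⊤ := by
  rw [depth]
  apply sInf_eq_top.mpr
  rintro n ⟨m, rfl, hw⟩
  exact absurd ⟨m, hw⟩ h

lemma depth_eq_sInf (h : ∃ n, Walk E r u n) :
    depth E r u = ((sInf {n | Walk E r u n} : ℕ) : ℕ∞) := by
  apply le_antisymm
  · exact depth_le_of_walk (Nat.sInf_mem h)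
  · apply le_sInf
    rintro b ⟨m, rfl, hw⟩
    exact_mod_cast Nat.cast_le.mpr (Nat.sInf_le hw)

lemma depth_coe_elim {n : ℕ} (h : depth E r u = (n : ℕ∞)) :
    Walk E r u n ∧ ∀ k, Walk E r u k → n ≤ k := by
  by_cases hr : ∃ m, Walk E r u m
  · rw [depth_eq_sInf hr] at h
    have hn : n = sInf {n | Walk E r u n} := by exact_mod_cast h.symm
    subst hn
    exact ⟨Nat.sInf_mem hr, fun k hk => Nat.sInf_le hk⟩
  · rw [depth_eq_top hr] at h
    simp at h

lemma depth_ne_top (h : depth E r u ≠ ⊤) : ∃ n : ℕ, depth E r u = (n : ℕ∞) := by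
  rcases (WithTop.ne_top_iff_exists).mp h with ⟨n, hn⟩
  exact ⟨n, hn.symm⟩

lemma depth_self (E : Finset (ℕ × ℕ)) (r : ℕ) : depth E r r = 0 := by
  have := depth_le_of_walk (walk_refl E r)
  simpa using this

lemma depth_mono (h : E ⊆ E') : depth E' r u ≤ depth E r u := by
  by_cases hr : ∃ n, Walk E r u n
  · obtain ⟨n, hn⟩ := depth_ne_top (by
      rcases hr with ⟨n, hw⟩
      exact ne_top_of_le_ne_top (by simp) (depth_le_of_walk hw))
    obtain ⟨⟨f, h0, hm, hE⟩, -⟩ := depth_coe_elim hn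
    rw [hn]
    exact depth_le_of_walk ⟨f, h0, hm, fun k hk => h (hE k hk)⟩
  · rw [depth_eq_top hr]
    exact le_top

lemma depth_child_le (he : (p, x) ∈ E) :
    depth E r x ≤ depth E r p + 1 := by
  by_cases hp : depth E r p = ⊤
  · simp [hp]
  · obtain ⟨n, hn⟩ := depth_ne_top hp
    obtain ⟨hw, -⟩ := depth_coe_elim hn
    rw [hn]
    have := depth_le_of_walk (walk_extend hw he)
    rw [Nat.cast_add, Nat.cast_one] at this
    exact this

lemma inDeg_unique (h : inDeg E x ≤ 1) (h1 : (p, x) ∈ E) (h2 : (q, x) ∈ E) :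
    p = q := by
  rw [inDeg, Finset.card_le_one] at h
  have := h (p, x) (by simp [h1]) (q, x) (by simp [h2])
  exact congrArg Prod.fst this

/-- L5: in a tree, depth of a node is depth of its parent plus one. -/
lemma depth_parent (hdeg : inDeg E x ≤ 1) (hpx : (p, x) ∈ E) (hxr : x ≠ r) :
    depth E r x = depth E r p + 1 := by
  apply le_antisymm (depth_child_le hpx)
  by_cases hx : depth E r x = ⊤
  · rw [hx]; exact le_top
  obtain ⟨n, hn⟩ := depth_ne_top hx
  obtain ⟨⟨f, h0, hm, hE⟩, -⟩ := depth_coe_elim hn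
  have hn0 : n ≠ 0 := by
    rintro rfl
    exact hxr (hm ▸ h0.symm ▸ rfl)
  have hedge : (f (n - 1), f n) ∈ E := by
    have := hE (n - 1) (by omega)
    rwa [show n - 1 + 1 = n by omega] at this
  have hfp : f (n - 1) = p := inDeg_unique hdeg (hm ▸ hedge) hpx
  have hwp : Walk E r p (n - 1) :=
    ⟨f, h0, hfp, fun k hk => hE k (by omega)⟩
  have := depth_le_of_walk hwp
  rw [hn]
  have harith : (((n - 1 : ℕ) : ℕ∞) + 1) = (n : ℕ∞) := by
    have h2 : (n - 1) + 1 = n := by omega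
    rw [← h2]
    push_cast
    ring
  exact le_trans (add_le_add_left this 1) (le_of_eq harith)


lemma min_walk_distinct {n : ℕ} (h : depth E r u = (n : ℕ∞)) :
    ∃ f : ℕ → ℕ, f 0 = r ∧ f n = u ∧ (∀ k < n, (f k, f (k + 1)) ∈ E) ∧
      ∀ a b, a ≤ n → b ≤ n → f a = f b → a = b := by
  obtain ⟨⟨f, h0, hm, hE⟩, hmin⟩ := depth_coe_elim h
  refine ⟨f, h0, hm, hE, ?_⟩
  have key : ∀ a b, a < b → b ≤ n → f a = f b → False := by
    intro a b hab hbn hfab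
    set d := b - a with hd
    have hd1 : 1 ≤ d := by omega
    have hwalk : Walk E r u (n - d) := by
      refine ⟨fun k => if k ≤ a then f k else f (k + d), ?_, ?_, ?_⟩
      · dsimp only
        rw [if_pos (by omega)]
        exact h0
      · dsimp only
        rcases le_or_gt (n - d) a with hcase | hcase
        · have hbn' : b = n := by omega
          have hna : n - d = a := by omega
          rw [if_pos hcase, hna, hfab, hbn']
          exact hm
        · rw [if_neg (by omega), show n - d + d = n by omega]
          exact hm
      · intro k hk
        dsimp only
        rcases lt_or_ge (k + 1) (a + 1) with hc | hc
        · rw [if_pos (by omega), if_pos (by omega)]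
          exact hE k (by omega)
        · rcases Nat.eq_or_lt_of_le hc with hc' | hc'
          · have hka : k = a := by omega
            subst hka
            rw [if_pos le_rfl, if_neg (by omega), hfab,
              show k + 1 + d = b + 1 by omega]
            exact hE b (by omega)
          · rw [if_neg (by omega), if_neg (by omega),
              show k + 1 + d = k + d + 1 by omega]
            exact hE (k + d) (by omega)
    have := hmin _ hwalk
    omega
  intro a b ha hb hab
  by_contra hne
  rcases Nat.lt_or_ge a b with h1 | h1
  · exact key a b h1 hb hab
  · exact key b a (by omega) ha hab.symm

lemma depth_prefix_le {n : ℕ} (f : ℕ → ℕ) (h0 : f 0 = r)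
    (hE : ∀ k < n, (f k, f (k + 1)) ∈ E) (k : ℕ) (hk : k ≤ n) :
    depth E r (f k) ≤ (k : ℕ∞) :=
  depth_le_of_walk ⟨f, h0, rfl, fun l hl => hE l (by omega)⟩

lemma depth_card_bound {s : Finset ℕ} {n : ℕ} (h : depth E r u = (n : ℕ∞))
    (hr : r ∈ s) (hEs : ∀ e ∈ E, e.2 ∈ s) : n + 1 ≤ s.card := by
  obtain ⟨f, h0, hm, hE, hinj⟩ := min_walk_distinct h
  have hmem : ∀ k ≤ n, f k ∈ s := by
    intro k hk
    cases k with
    | zero => rw [h0]; exact hr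
    | succ k => exact hEs _ (hE k (by omega))
  have hcard : (Finset.range (n + 1)).card ≤ s.card := by
    apply Finset.card_le_card_of_injOn (fun k => f k)
    · intro k hk
      exact hmem k (by simpa using Nat.lt_succ_iff.mp (Finset.mem_range.mp hk))
    · intro a ha b hb hab
      exact hinj a b (Nat.lt_succ_iff.mp (Finset.mem_range.mp ha))
        (Nat.lt_succ_iff.mp (Finset.mem_range.mp hb)) hab
  simpa using hcard

lemma depth_card_bound_avoid {s : Finset ℕ} {z : ℕ} {n : ℕ}
    (h : depth E r u = (n : ℕ∞)) (hz : (n : ℕ∞) < depth E r z)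
    (hr : r ∈ s) (hzs : z ∈ s) (hEs : ∀ e ∈ E, e.2 ∈ s) :
    n + 2 ≤ s.card := by
  obtain ⟨f, h0, hm, hE, hinj⟩ := min_walk_distinct h
  have hnz : ∀ k ≤ n, f k ≠ z := by
    intro k hk hcon
    have := depth_prefix_le f h0 hE k hk
    rw [hcon] at this
    have h2 : depth E r z ≤ (n : ℕ∞) :=
      le_trans this (by exact_mod_cast Nat.cast_le.mpr hk)
    exact absurd (lt_of_lt_of_le hz h2) (lt_irrefl _)
  have hmem : ∀ k ≤ n, f k ∈ s.erase z := by
    intro k hk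
    apply Finset.mem_erase.mpr
    refine ⟨hnz k hk, ?_⟩
    cases k with
    | zero => rw [h0]; exact hr
    | succ k => exact hEs _ (hE k (by omega))
  have hcard : (Finset.range (n + 1)).card ≤ (s.erase z).card := by
    apply Finset.card_le_card_of_injOn (fun k => f k)
    · intro k hk
      exact hmem k (Nat.lt_succ_iff.mp (Finset.mem_range.mp hk))
    · intro a ha b hb hab
      exact hinj a b (Nat.lt_succ_iff.mp (Finset.mem_range.mp ha))
        (Nat.lt_succ_iff.mp (Finset.mem_range.mp hb)) hab
  rw [Finset.card_range, Finset.card_erase_of_mem hzs] at hcard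
  have : 1 ≤ s.card := Finset.card_pos.mpr ⟨z, hzs⟩
  omega

lemma depth_le_insert_src (E : Finset (ℕ × ℕ)) (r s t : ℕ) :
    depth E r s ≤ depth (insert (s, t) E) r s := by
  by_cases h : depth (insert (s, t) E) r s = ⊤
  · rw [h]; exact le_top
  obtain ⟨n, hn⟩ := depth_ne_top h
  obtain ⟨⟨f, h0, hm, hE⟩, hmin⟩ := depth_coe_elim hn
  rw [hn]
  apply depth_le_of_walk (n := n)
  refine ⟨f, h0, hm, fun k hk => ?_⟩
  rcases Finset.mem_insert.mp (hE k hk) with heq | hmem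
  · exfalso
    have hfk : f k = s := congrArg Prod.fst heq
    have : Walk (insert (s, t) E) r s k :=
      ⟨f, h0, hfk, fun l hl => hE l (by omega)⟩
    have := hmin k this
    omega
  · exact hmem

/-- Key lemma: replacing the parent `p` of `x` by a node `q` that is strictly
shallower than `x` does not increase any depth. -/
lemma reparent_le (hpx : (p, x) ∈ E) (hq : depth E r q + 1 ≤ depth E r x)
    (w : ℕ) :
    depth (insert (q, x) (E.erase (p, x))) r w ≤ depth E r w := by
  set E' := insert (q, x) (E.erase (p, x)) with hE'def
  by_cases hw : depth E r w = ⊤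
  · rw [hw]; exact le_top
  obtain ⟨n, hn⟩ := depth_ne_top hw
  obtain ⟨⟨f, h0, hm, hE⟩, -⟩ := depth_coe_elim hn
  rw [hn]
  by_cases huse : ∀ k < n, (f k, f (k + 1)) ≠ (p, x)
  · exact depth_le_of_walk ⟨f, h0, hm, fun k hk =>
      Finset.mem_insert_of_mem (Finset.mem_erase.mpr ⟨huse k hk, hE k hk⟩)⟩
  push_neg at huse
  obtain ⟨j, hj, hjeq⟩ := huse
  have hfj : f (j + 1) = x := congrArg Prod.snd hjeq
  set k := Nat.findGreatest (fun m => f m = x) n with hkdef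
  have hkx : f k = x :=
    Nat.findGreatest_spec (P := fun m => f m = x) (m := j + 1) (by omega) hfj
  have hkn : k ≤ n := Nat.findGreatest_le n
  have hlast : ∀ m, k < m → m ≤ n → f m ≠ x := by
    intro m h1 h2
    exact Nat.findGreatest_is_greatest (P := fun m => f m = x) h1 h2
  have hdx : depth E r x ≤ (k : ℕ∞) :=
    hkx ▸ depth_prefix_le f h0 hE k hkn
  have hq2 : depth E r q + 1 ≤ (k : ℕ∞) := le_trans hq hdx
  have hqfin : depth E r q ≠ ⊤ := by
    intro hcon
    rw [hcon] at hq2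
    simp at hq2
  obtain ⟨d, hd⟩ := depth_ne_top hqfin
  have hdk : d + 1 ≤ k := by
    rw [hd] at hq2
    exact_mod_cast hq2
  obtain ⟨⟨g, hg0, hgd, hgE⟩, -⟩ := depth_coe_elim hd
  have hgnx : ∀ l ≤ d, g l ≠ x := by
    intro l hl hcon
    have h1 : depth E r x ≤ (l : ℕ∞) := hcon ▸ depth_prefix_le g hg0 hgE l hl
    have h2 : (d : ℕ∞) + 1 ≤ (l : ℕ∞) :=
      le_trans (by rw [← hd]; exact hq) h1
    have : ((d + 1 : ℕ) : ℕ∞) ≤ (l : ℕ∞) := by push_cast; exact h2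
    have := Nat.cast_le.mp this
    omega
  have hgE' : Walk E' r q d := by
    refine ⟨g, hg0, hgd, fun l hl => ?_⟩
    apply Finset.mem_insert_of_mem
    apply Finset.mem_erase.mpr
    refine ⟨fun hcon => hgnx (l + 1) (by omega) (congrArg Prod.snd hcon), hgE l hl⟩
  have hwx : Walk E' r x (d + 1) := walk_extend hgE' (Finset.mem_insert_self _ _)
  have hsuf : Walk E' x w (n - k) := by
    refine ⟨fun t => f (k + t), ?_, ?_, fun t ht => ?_⟩
    · dsimp only
      rw [Nat.add_zero]
      exact hkx
    · dsimp only
      rw [show k + (n - k) = n by omega]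
      exact hm
    dsimp only
    apply Finset.mem_insert_of_mem
    apply Finset.mem_erase.mpr
    constructor
    · intro hcon
      have : f (k + t + 1) = x := by
        have := congrArg Prod.snd hcon
        simpa [show k + (t + 1) = k + t + 1 by omega] using this
      exact hlast (k + t + 1) (by omega) (by omega) this
    · have := hE (k + t) (by omega)
      rwa [show k + t + 1 = k + (t + 1) by omega] at this
  have hfinal := depth_le_of_walk (walk_concat hwx hsuf)
  refine le_trans hfinal ?_
  have hgoal : (d + 1) + (n - k) ≤ n := by omega
  exact_mod_cast Nat.cast_le.mpr hgoal


/-- Truncated depth. -/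
noncomputable def Tm (N : ℕ) (G : Finset (ℕ × ℕ)) (r w : ℕ) : ℕ :=
  (min (depth G r w) (N : ℕ∞)).toNat

lemma Tm_le_N (N : ℕ) (G : Finset (ℕ × ℕ)) (r w : ℕ) : Tm N G r w ≤ N := by
  have := ENat.toNat_le_toNat (min_le_right (depth G r w) (N : ℕ∞))
    (by simp : ((N : ℕ∞)) ≠ ⊤)
  simpa [Tm] using this

lemma Tm_mono {N : ℕ} {G G' : Finset (ℕ × ℕ)} {r w : ℕ}
    (h : depth G' r w ≤ depth G r w) : Tm N G' r w ≤ Tm N G r w := by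
  apply ENat.toNat_le_toNat (min_le_min h le_rfl)
  exact ne_top_of_le_ne_top (by simp) (min_le_right _ _)

lemma Tm_le {N : ℕ} {G : Finset (ℕ × ℕ)} {r w m : ℕ}
    (h : depth G r w ≤ (m : ℕ∞)) : Tm N G r w ≤ m := by
  have h2 : min (depth G r w) (N : ℕ∞) ≤ (m : ℕ∞) :=
    le_trans (min_le_left (depth G r w) (N : ℕ∞)) h
  have := ENat.toNat_le_toNat h2 (by simp : ((m : ℕ∞)) ≠ ⊤)
  simpa [Tm] using this

lemma le_Tm {N : ℕ} {G : Finset (ℕ × ℕ)} {r w m : ℕ}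
    (h1 : (m : ℕ∞) ≤ depth G r w) (h2 : m ≤ N) : m ≤ Tm N G r w := by
  have hmin : (m : ℕ∞) ≤ min (depth G r w) (N : ℕ∞) :=
    le_min h1 (by exact_mod_cast h2)
  have := ENat.toNat_le_toNat hmin
    (ne_top_of_le_ne_top (by simp) (min_le_right _ _))
  simpa [Tm] using this

lemma outDeg_insert_ne {a b w : ℕ} (h : a ≠ w) :
    outDeg (insert (a, b) E) w = outDeg E w := by
  rw [outDeg, outDeg, Finset.filter_insert, if_neg (by simpa using h)]

lemma outDeg_insert_self {a b : ℕ} (h : (a, b) ∉ E) :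
    outDeg (insert (a, b) E) a = outDeg E a + 1 := by
  rw [outDeg, outDeg, Finset.filter_insert, if_pos rfl,
    Finset.card_insert_of_notMem (by simp [h])]

lemma outDeg_erase_ne {a b w : ℕ} (h : a ≠ w) :
    outDeg (E.erase (a, b)) w = outDeg E w := by
  rw [outDeg, outDeg, Finset.filter_erase]
  rw [Finset.erase_eq_of_notMem (by simp [h])]

lemma outDeg_erase_self {a b : ℕ} (h : (a, b) ∈ E) :
    outDeg (E.erase (a, b)) a + 1 = outDeg E a := by
  rw [outDeg, outDeg, Finset.filter_erase]
  rw [Finset.card_erase_of_mem (by simp [h])]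
  have : 0 < (E.filter fun e => e.1 = a).card :=
    Finset.card_pos.mpr ⟨(a, b), by simp [h]⟩
  omega

lemma outDeg_pos {a b : ℕ} (h : (a, b) ∈ E) : 0 < outDeg E a :=
  Finset.card_pos.mpr ⟨(a, b), by simp [h]⟩

lemma inDeg_pos {a b : ℕ} (h : (a, b) ∈ E) : 0 < inDeg E b :=
  Finset.card_pos.mpr ⟨(a, b), by simp [h]⟩

lemma inDeg_reparent_le_one {p q x : ℕ} (h : inDeg E x ≤ 1) (hpx : (p, x) ∈ E) :
    inDeg (insert (q, x) (E.erase (p, x))) x ≤ 1 := by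
  rw [inDeg, Finset.card_le_one]
  intro e1 he1 e2 he2
  have key : ∀ e, e ∈ Finset.filter (fun e => e.2 = x)
      (insert (q, x) (E.erase (p, x))) → e = (q, x) := by
    intro e he
    rcases Finset.mem_filter.mp he with ⟨hmem, hsnd⟩
    rcases Finset.mem_insert.mp hmem with heq | hmem'
    · exact heq
    · exfalso
      rcases Finset.mem_erase.mp hmem' with ⟨hne, hmem''⟩
      have : e = (p, x) := by
        have := inDeg_unique h (p := e.1) (q := p) (by rw [← hsnd]; simpa using hmem'') hpx
        cases e
        simp_all
      exact hne this
  rw [key e1 he1, key e2 he2]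

lemma snd_ne_root {i w x : ℕ} (hroot : inDeg E i = 0) (h : (w, x) ∈ E) :
    x ≠ i := by
  intro hcon
  subst hcon
  have := inDeg_pos h
  omega

lemma card_V (N : ℕ) : (V N).card = N := by
  simp [V]

lemma R_subset_V {N M : ℕ} (h : M ≤ N) : R M ⊆ V N :=
  Finset.Icc_subset_Icc le_rfl h

/-- Per-colour non-strict decrease of `Y` under a reparent. -/
lemma Ycolor_le {G : Finset (ℕ × ℕ)} {r p q x N : ℕ}
    (hq : depth G r q + 1 ≤ depth G r x) (hpx : (p, x) ∈ G) :
    ∑ w ∈ V N, Tm N (insert (q, x) (G.erase (p, x))) r w ≤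
      ∑ w ∈ V N, Tm N G r w :=
  Finset.sum_le_sum fun w _ => Tm_mono (reparent_le hpx hq w)

/-- Per-colour strict decrease of `Y` under a reparent to a strictly
shallower parent. -/
lemma Ycolor_lt {G : Finset (ℕ × ℕ)} {r p q x N : ℕ}
    (hpx : (p, x) ∈ G) (hdeg : inDeg G x ≤ 1) (hxr : x ≠ r)
    (hq : depth G r q < depth G r p)
    (hrV : r ∈ V N) (hpV : p ∈ V N) (hxV : x ∈ V N)
    (hsnd : ∀ e ∈ G, e.2 ∈ V N) :
    ∑ w ∈ V N, Tm N (insert (q, x) (G.erase (p, x))) r w + 1 ≤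
      ∑ w ∈ V N, Tm N G r w := by
  set G' := insert (q, x) (G.erase (p, x)) with hG'
  have hLx : depth G r x = depth G r p + 1 := depth_parent hdeg hpx hxr
  have hq' : depth G r q + 1 ≤ depth G r x := by
    rw [hLx]
    exact add_le_add_left (le_of_lt hq) 1
  have hqfin : depth G r q ≠ ⊤ := fun hcon => by
    rw [hcon] at hq
    exact absurd hq (by simp)
  obtain ⟨a, ha⟩ := depth_ne_top hqfin
  -- a + 2 ≤ N
  have haN : a + 2 ≤ N := by
    have := depth_card_bound_avoid (z := p) ha (ha ▸ hq) hrV hpV hsnd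
    rwa [card_V] at this
  -- strict at x
  have hnew : depth G' r x ≤ ((a + 1 : ℕ) : ℕ∞) := by
    have h1 : depth G' r x ≤ depth G' r q + 1 :=
      depth_child_le (Finset.mem_insert_self _ _)
    have h2 : depth G' r q ≤ depth G r q := reparent_le hpx hq' q
    calc depth G' r x ≤ depth G r q + 1 := le_trans h1 (add_le_add_left h2 1)
      _ = ((a + 1 : ℕ) : ℕ∞) := by rw [ha]; push_cast; ring
  have hold : ((a + 2 : ℕ) : ℕ∞) ≤ depth G r x := by
    rw [hLx]
    have h1 : ((a + 1 : ℕ) : ℕ∞) ≤ depth G r p := by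
      rw [show ((a + 1 : ℕ) : ℕ∞) = (a : ℕ∞) + 1 by push_cast; ring]
      exact (ENat.add_one_le_iff (by simp)).mpr (ha ▸ hq)
    calc ((a + 2 : ℕ) : ℕ∞) = ((a + 1 : ℕ) : ℕ∞) + 1 := by push_cast; ring
      _ ≤ depth G r p + 1 := add_le_add_left h1 1
  have hstrict : Tm N G' r x < Tm N G r x := by
    have h1 : Tm N G' r x ≤ a + 1 := Tm_le hnew
    have h2 : a + 2 ≤ Tm N G r x := le_Tm hold haN
    omega
  have hlt : ∑ w ∈ V N, Tm N G' r w < ∑ w ∈ V N, Tm N G r w := by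
    apply Finset.sum_lt_sum
    · exact fun w _ => Tm_mono (reparent_le hpx hq' w)
    · exact ⟨x, hxV, hstrict⟩
  omega

/-- Per-colour preservation of all depths under reparent to an equally deep
parent. -/
lemma depth_reparent_eq {G : Finset (ℕ × ℕ)} {r p q x : ℕ}
    (hpx : (p, x) ∈ G) (hqx : (q, x) ∉ G) (hdeg : inDeg G x ≤ 1) (hxr : x ≠ r)
    (hdq : depth G r q = depth G r p) (w : ℕ) :
    depth (insert (q, x) (G.erase (p, x))) r w = depth G r w := by
  set G' := insert (q, x) (G.erase (p, x)) with hG'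
  have hLx : depth G r x = depth G r p + 1 := depth_parent hdeg hpx hxr
  have hq' : depth G r q + 1 ≤ depth G r x := by rw [hLx, hdq]
  apply le_antisymm (reparent_le hpx hq' w)
  -- reverse direction
  have herase : G'.erase (q, x) = G.erase (p, x) := by
    rw [hG']
    exact Finset.erase_insert (fun hcon => hqx (Finset.mem_of_mem_erase hcon))
  have hGeq : insert (p, x) (G'.erase (q, x)) = G := by
    rw [herase, Finset.insert_erase hpx]
  have hdegG' : inDeg G' x ≤ 1 := inDeg_reparent_le_one hdeg hpx
  have hqxG' : (q, x) ∈ G' := Finset.mem_insert_self _ _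
  have hLxG' : depth G' r x = depth G' r q + 1 := depth_parent hdegG' hqxG' hxr
  have hqmono : depth G r q ≤ depth G' r q := by
    calc depth G r q ≤ depth (G.erase (p, x)) r q :=
          depth_mono (Finset.erase_subset _ _)
      _ ≤ depth G' r q := depth_le_insert_src _ r q x
  have hp' : depth G' r p + 1 ≤ depth G' r x := by
    rw [hLxG']
    apply add_le_add_left
    calc depth G' r p ≤ depth G r p := reparent_le hpx hq' p
      _ = depth G r q := hdq.symm
      _ ≤ depth G' r q := hqmono
  have := reparent_le (E := G') (p := q) (q := p) (x := x) hqxG' hp' w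
  rwa [hGeq] at this


lemma walk_hits_leaf_last {G : Finset (ℕ × ℕ)} {v : ℕ} (hod : outDeg G v = 0)
    (g : ℕ → ℕ) (len : ℕ) (hE : ∀ t < len, (g t, g (t + 1)) ∈ G)
    {j : ℕ} (hj : j < len) (hgv : g (j + 1) = v) : j + 1 = len := by
  by_contra hcon
  have hlt : j + 1 < len := by omega
  have := hE (j + 1) hlt
  rw [hgv] at this
  have := outDeg_pos this
  omega

/-- Pointwise non-increase of depths under a LeafSwap, for every node `w ≠ v`. -/
lemma leafswap_ptwise {G : Finset (ℕ × ℕ)} {r up u vp v : ℕ}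
    (hup : (up, u) ∈ G) (hvp : (vp, v) ∈ G)
    (hod : outDeg G v = 0)
    (hdegv : inDeg G v ≤ 1) (hvr : v ≠ r)
    (hab : depth G r v < depth G r u)
    {w : ℕ} (hw : w ≠ v) :
    depth (insert (up, v) (insert (vp, u) ((G.erase (up, u)).erase (vp, v)))) r w
      ≤ depth G r w := by
  set G' := insert (up, v) (insert (vp, u) ((G.erase (up, u)).erase (vp, v)))
    with hG'
  have hvpv : vp ≠ v := by
    intro hcon
    subst hcon
    have := outDeg_pos hvp
    omega
  have hafin : depth G r v ≠ ⊤ := ne_top_of_lt hab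
  obtain ⟨a, ha⟩ := depth_ne_top hafin
  have hLv : depth G r v = depth G r vp + 1 := depth_parent hdegv hvp hvr
  have hvpfin : depth G r vp ≠ ⊤ := by
    intro hcon
    rw [hLv, hcon] at ha
    simp at ha
  obtain ⟨a', ha'⟩ := depth_ne_top hvpfin
  have haa' : a' + 1 = a := by
    have : ((a' : ℕ∞)) + 1 = (a : ℕ∞) := by rw [← ha', ← hLv, ha]
    exact_mod_cast this
  have hmemG' : ∀ e ∈ G, e ≠ (up, u) → e ≠ (vp, v) → e ∈ G' := by
    intro e he h1 h2
    exact Finset.mem_insert_of_mem (Finset.mem_insert_of_mem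
      (Finset.mem_erase.mpr ⟨h2, Finset.mem_erase.mpr ⟨h1, he⟩⟩))
  by_cases hwfin : depth G r w = ⊤
  · rw [hwfin]; exact le_top
  obtain ⟨n, hn⟩ := depth_ne_top hwfin
  obtain ⟨⟨f, h0, hm, hE⟩, -⟩ := depth_coe_elim hn
  rw [hn]
  have hnovpv : ∀ j < n, (f j, f (j + 1)) ≠ (vp, v) := by
    intro j hj hcon
    have hfv : f (j + 1) = v := congrArg Prod.snd hcon
    have := walk_hits_leaf_last hod f n hE hj hfv
    rw [this, hm] at hfv
    exact hw hfv
  by_cases huse : ∀ j < n, (f j, f (j + 1)) ≠ (up, u)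
  · exact depth_le_of_walk ⟨f, h0, hm, fun k hk =>
      hmemG' _ (hE k hk) (huse k hk) (hnovpv k hk)⟩
  push_neg at huse
  obtain ⟨j, hj, hjeq⟩ := huse
  have hfj : f (j + 1) = u := congrArg Prod.snd hjeq
  set k := Nat.findGreatest (fun m => f m = u) n with hkdef
  have hkx : f k = u :=
    Nat.findGreatest_spec (P := fun m => f m = u) (m := j + 1) (by omega) hfj
  have hkn : k ≤ n := Nat.findGreatest_le n
  have hlast : ∀ m, k < m → m ≤ n → f m ≠ u := fun m h1 h2 =>
    Nat.findGreatest_is_greatest (P := fun m => f m = u) h1 h2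
  have hdu : depth G r u ≤ (k : ℕ∞) := hkx ▸ depth_prefix_le f h0 hE k hkn
  have hak : a + 1 ≤ k := by
    have h1 : ((a : ℕ∞)) + 1 ≤ depth G r u :=
      (ENat.add_one_le_iff (by simp)).mpr (ha ▸ hab)
    have h2 : ((a + 1 : ℕ) : ℕ∞) ≤ (k : ℕ∞) := by
      push_cast
      exact le_trans h1 hdu
    exact_mod_cast h2
  obtain ⟨⟨g, hg0, hgd, hgE⟩, -⟩ := depth_coe_elim ha'
  have hgG' : Walk G' r vp a' := by
    refine ⟨g, hg0, hgd, fun l hl => ?_⟩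
    apply hmemG' _ (hgE l hl)
    · intro hcon
      have hglu : g (l + 1) = u := congrArg Prod.snd hcon
      have h1 : depth G r u ≤ ((l + 1 : ℕ) : ℕ∞) :=
        hglu ▸ depth_prefix_le g hg0 hgE (l + 1) (by omega)
      have h2 : ((a : ℕ∞)) + 1 ≤ depth G r u :=
        (ENat.add_one_le_iff (by simp)).mpr (ha ▸ hab)
      have h3 : ((a + 1 : ℕ) : ℕ∞) ≤ ((l + 1 : ℕ) : ℕ∞) := by
        push_cast
        exact le_trans h2 h1
      have := Nat.cast_le.mp h3
      omega
    · intro hcon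
      have hglv : g (l + 1) = v := congrArg Prod.snd hcon
      have := walk_hits_leaf_last hod g a' hgE hl hglv
      rw [this, hgd] at hglv
      exact hvpv hglv
  have hwu : Walk G' r u (a' + 1) :=
    walk_extend hgG' (Finset.mem_insert_of_mem (Finset.mem_insert_self _ _))
  have hsuf : Walk G' u w (n - k) := by
    refine ⟨fun t => f (k + t), ?_, ?_, fun t ht => ?_⟩
    · dsimp only
      rw [Nat.add_zero]
      exact hkx
    · dsimp only
      rw [show k + (n - k) = n by omega]
      exact hm
    · dsimp only
      have hedge := hE (k + t) (by omega)
      rw [show k + (t + 1) = k + t + 1 by omega]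
      apply hmemG' _ hedge
      · intro hcon
        exact hlast (k + t + 1) (by omega) (by omega)
          (congrArg Prod.snd hcon)
      · exact hnovpv (k + t) (by omega)
  have hfinal := depth_le_of_walk (walk_concat hwu hsuf)
  refine le_trans hfinal ?_
  have hgoal : (a' + 1) + (n - k) ≤ n := by omega
  exact_mod_cast Nat.cast_le.mpr hgoal


lemma Tm_mono2 {N : ℕ} {G G' : Finset (ℕ × ℕ)} {r r' w w' : ℕ}
    (h : depth G' r' w' ≤ depth G r w) : Tm N G' r' w' ≤ Tm N G r w := by
  apply ENat.toNat_le_toNat (min_le_min h le_rfl)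
  exact ne_top_of_le_ne_top (by simp) (min_le_right _ _)

lemma sum_congr_except {s : Finset ℕ} {i : ℕ} (hi : i ∈ s) (f g : ℕ → ℕ)
    (h : ∀ l ∈ s, l ≠ i → f l = g l) :
    ∑ l ∈ s, f l = ∑ l ∈ s.erase i, g l + f i := by
  rw [← Finset.sum_erase_add s f hi]
  congr 1
  apply Finset.sum_congr rfl
  intro l hl
  exact h l (Finset.mem_of_mem_erase hl) (Finset.ne_of_mem_erase hl)

lemma sum_congr_except2 {s : Finset ℕ} {i j : ℕ} (hi : i ∈ s) (hj : j ∈ s)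
    (hij : j ≠ i) (f g : ℕ → ℕ)
    (h : ∀ l ∈ s, l ≠ i → l ≠ j → f l = g l) :
    ∑ l ∈ s, f l = ∑ l ∈ (s.erase i).erase j, g l + f i + f j := by
  rw [← Finset.sum_erase_add s f hi,
    ← Finset.sum_erase_add (s.erase i) f (Finset.mem_erase.mpr ⟨hij, hj⟩)]
  have : ∑ l ∈ (s.erase i).erase j, f l = ∑ l ∈ (s.erase i).erase j, g l := by
    apply Finset.sum_congr rfl
    intro l hl
    have hl1 := Finset.mem_of_mem_erase hl
    exact h l (Finset.mem_of_mem_erase hl1) (Finset.ne_of_mem_erase hl1)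
      (Finset.ne_of_mem_erase hl)
  omega

lemma Yval_eq (N M : ℕ) (D : Cfg) :
    Yval N M D = ∑ l ∈ R M, ∑ w ∈ V N, Tm N (D l) l w := by
  rw [Yval, Finset.sum_comm]
  rfl

end Aux

/-- performing any applicable Add, Insert, Jump, LeafSwap or MixSwap
on a Tree Initially configuration makes the triple `(−|E|, Y, −S)` strictly
decrease lexicographically. -/
theorem potential_decreases
    (N M K : ℕ) (hK : 0 < K) (hKM : K ≤ M) (hMN : M ≤ N)
    (dbar : ℕ → ℕ) (C C' : Cfg)
    (hvalid : ValidEdges N M C) (htree : TreeInit N M K C)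
    (hstep : Step N M K dbar C C') :
    numE M C + 1 ≤ numE M C' ∨
    (numE M C' = numE M C ∧ Yval N M C' + 1 ≤ Yval N M C) ∨
    (numE M C' = numE M C ∧ Yval N M C' = Yval N M C ∧
      Sval N M C + 1 ≤ Sval N M C') := by
  obtain ⟨hinc, hdeg1, hroot⟩ := htree
  rcases hstep with ⟨up, u, i, happ, hC'⟩ | ⟨up, u, uc, i, happ, hC'⟩ |
    ⟨up, u, v, i, hupu, happ, hC'⟩ | ⟨up, u, vp, v, i, hupu, hvpvm, happ, hC'⟩ |
    ⟨u, uc, v, vc, i, j, happ, hC'⟩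
  -- Add
  · subst hC'
    obtain ⟨hi, hupV, huV, hK, hnHas, hHasp, hd⟩ := happ
    left
    have hnot : (up, u) ∉ C i := fun hc => hnHas (Or.inl ⟨up, hc⟩)
    have e1 : ∑ l ∈ R M, ((doAdd C up u i) l).card
        = ∑ l ∈ (R M).erase i, (C l).card + ((doAdd C up u i) i).card :=
      sum_congr_except hi _ _ (fun l _ hne => by simp [doAdd, hne])
    have e2 : ∑ l ∈ R M, (C l).card
        = ∑ l ∈ (R M).erase i, (C l).card + (C i).card :=
      sum_congr_except hi _ _ (fun l _ _ => rfl)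
    have e3 : ((doAdd C up u i) i).card = (C i).card + 1 := by
      simp [doAdd, Finset.card_insert_of_notMem hnot]
    rw [numE, numE, e1, e2, e3]
    omega
  -- Insert
  · subst hC'
    obtain ⟨hi, hupV, huV, hK, hnHas, hHasp, hedge⟩ := happ
    left
    have hucV : uc ∈ V N := (hvalid i hi _ hedge).2.1
    have huup : u ≠ up := fun hc => hnHas (hc ▸ hHasp)
    have hupu' : (up, u) ∉ C i := fun hc => hnHas (Or.inl ⟨up, hc⟩)
    have huuc : (u, uc) ∉ C i := by
      intro hc
      have := inDeg_unique (hdeg1 i hi uc hucV) hc hedge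
      exact huup this
    have e3 : ((doInsert C up u uc i) i).card = (C i).card + 1 := by
      have h1 : (u, uc) ∉ (C i).erase (up, uc) :=
        fun hc => huuc (Finset.mem_of_mem_erase hc)
      have h2 : (up, u) ∉ insert (u, uc) ((C i).erase (up, uc)) := by
        intro hc
        rcases Finset.mem_insert.mp hc with hc1 | hc1
        · exact huup (congrArg Prod.fst hc1).symm  
        · exact hupu' (Finset.mem_of_mem_erase hc1)
      have hif : (doInsert C up u uc i) i
          = insert (up, u) (insert (u, uc) ((C i).erase (up, uc))) := by
        simp [doInsert]
      rw [hif, Finset.card_insert_of_notMem h2, Finset.card_insert_of_notMem h1,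
        Finset.card_erase_of_mem hedge]
      have : 0 < (C i).card := Finset.card_pos.mpr ⟨_, hedge⟩
      omega
    have e1 : ∑ l ∈ R M, ((doInsert C up u uc i) l).card
        = ∑ l ∈ (R M).erase i, (C l).card + ((doInsert C up u uc i) i).card :=
      sum_congr_except hi _ _ (fun l _ hne => by simp [doInsert, hne])
    have e2 : ∑ l ∈ R M, (C l).card
        = ∑ l ∈ (R M).erase i, (C l).card + (C i).card :=
      sum_congr_except hi _ _ (fun l _ _ => rfl)
    rw [numE, numE, e1, e2, e3]
    omega
  -- Jump
  · subst hC'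
    obtain ⟨hi, -, havail, hHasv, hdlt⟩ := happ
    have hiV : i ∈ V N := R_subset_V hMN hi
    have hupV : up ∈ V N := (hvalid i hi _ hupu).1
    have huV : u ∈ V N := (hvalid i hi _ hupu).2.1
    have hsnd : ∀ e ∈ C i, e.2 ∈ V N := fun e he => (hvalid i hi e he).2.1
    have hune : u ≠ i := snd_ne_root (hroot i hi) hupu
    have hdegu : inDeg (C i) u ≤ 1 := hdeg1 i hi u huV
    have hLu : depth (C i) i u = depth (C i) i up + 1 :=
      depth_parent hdegu hupu hune
    have hq : depth (C i) i v < depth (C i) i up := by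
      rw [hLu] at hdlt
      by_contra hcon
      push_neg at hcon
      exact absurd (lt_of_le_of_lt (add_le_add_left hcon 1) hdlt)
        (lt_irrefl _)
    have hvu : (v, u) ∉ C i := by
      intro hc
      have := inDeg_unique hdegu hc hupu
      rw [this] at hq
      exact absurd hq (lt_irrefl _)
    -- numE preserved
    have e3 : ((doJump C up u v i) i).card = (C i).card := by
      have hif : (doJump C up u v i) i = insert (v, u) ((C i).erase (up, u)) := by
        simp [doJump]
      rw [hif, Finset.card_insert_of_notMem
        (fun hc => hvu (Finset.mem_of_mem_erase hc)),
        Finset.card_erase_of_mem hupu]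
      have : 0 < (C i).card := Finset.card_pos.mpr ⟨_, hupu⟩
      omega
    have e1 : ∑ l ∈ R M, ((doJump C up u v i) l).card
        = ∑ l ∈ (R M).erase i, (C l).card + ((doJump C up u v i) i).card :=
      sum_congr_except hi _ _ (fun l _ hne => by simp [doJump, hne])
    have e2 : ∑ l ∈ R M, (C l).card
        = ∑ l ∈ (R M).erase i, (C l).card + (C i).card :=
      sum_congr_except hi _ _ (fun l _ _ => rfl)
    have hnumE : numE M (doJump C up u v i) = numE M C := by
      rw [numE, numE, e1, e2, e3]
    right; left
    refine ⟨hnumE, ?_⟩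
    -- Y strictly decreases
    have hYi : ∑ w ∈ V N, Tm N ((doJump C up u v i) i) i w + 1 ≤
        ∑ w ∈ V N, Tm N (C i) i w := by
      have := Ycolor_lt (N := N) hupu hdegu hune hq hiV hupV huV hsnd
      simpa [doJump] using this
    have y1 : Yval N M (doJump C up u v i)
        = ∑ l ∈ (R M).erase i, (∑ w ∈ V N, Tm N (C l) l w) +
          ∑ w ∈ V N, Tm N ((doJump C up u v i) i) i w := by
      rw [Yval_eq]
      exact sum_congr_except hi _ _ (fun l _ hne => by simp [doJump, hne])
    have y2 : Yval N M C
        = ∑ l ∈ (R M).erase i, (∑ w ∈ V N, Tm N (C l) l w) +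
          ∑ w ∈ V N, Tm N (C i) i w := by
      rw [Yval_eq]
      exact sum_congr_except hi _ _ (fun l _ _ => rfl)
    rw [y1, y2]
    omega
  -- LeafSwap
  · subst hC'
    obtain ⟨hi, -, -, hodv, hodu, hdvu⟩ := happ
    have hiV : i ∈ V N := R_subset_V hMN hi
    have hupV : up ∈ V N := (hvalid i hi _ hupu).1
    have huV : u ∈ V N := (hvalid i hi _ hupu).2.1
    have hvpV : vp ∈ V N := (hvalid i hi _ hvpvm).1
    have hvV : v ∈ V N := (hvalid i hi _ hvpvm).2.1
    have hsnd : ∀ e ∈ C i, e.2 ∈ V N := fun e he => (hvalid i hi e he).2.1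
    have hune : u ≠ i := snd_ne_root (hroot i hi) hupu
    have hvne : v ≠ i := snd_ne_root (hroot i hi) hvpvm
    have hdegu : inDeg (C i) u ≤ 1 := hdeg1 i hi u huV
    have hdegv : inDeg (C i) v ≤ 1 := hdeg1 i hi v hvV
    -- a child c of u
    obtain ⟨e, he⟩ := Finset.card_pos.mp hodu
    rcases Finset.mem_filter.mp he with ⟨heC, hefst⟩
    set c := e.2 with hcdef
    have hedgec : (u, c) ∈ C i := by
      rw [← hefst, hcdef]
      exact heC
    have hcV : c ∈ V N := (hvalid i hi _ hedgec).2.1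
    have hcne : c ≠ i := snd_ne_root (hroot i hi) hedgec
    have hdegc : inDeg (C i) c ≤ 1 := hdeg1 i hi c hcV
    -- distinctness
    have hvu : v ≠ u := by
      intro h
      rw [h] at hdvu
      exact absurd hdvu (lt_irrefl _)
    have hvpu : vp ≠ u := by
      intro h
      subst h
      have := depth_parent hdegv hvpvm hvne
      rw [this] at hdvu
      exact absurd (lt_of_le_of_lt le_self_add hdvu) (lt_irrefl _)
    have hupv : up ≠ v := by
      intro h
      subst h
      have := outDeg_pos hupu
      omega
    have hvpv : vp ≠ v := by
      intro h
      subst h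
      have := outDeg_pos hvpvm
      omega
    have hcu : c ≠ u := ((hvalid i hi _ hedgec).2.2).symm
    have hcv : c ≠ v := by
      intro h
      rw [h] at hedgec
      exact hvpu (inDeg_unique hdegv hedgec hvpvm).symm
    -- depths
    have hafin : depth (C i) i v ≠ ⊤ := ne_top_of_lt hdvu
    obtain ⟨a, ha⟩ := depth_ne_top hafin
    have hLv : depth (C i) i v = depth (C i) i vp + 1 :=
      depth_parent hdegv hvpvm hvne
    have hLu : depth (C i) i u = depth (C i) i up + 1 :=
      depth_parent hdegu hupu hune
    have hLc : depth (C i) i c = depth (C i) i u + 1 :=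
      depth_parent hdegc hedgec hcne
    have haN : a + 2 ≤ N := by
      have := depth_card_bound_avoid (z := u) ha (ha ▸ hdvu) hiV huV hsnd
      rwa [card_V] at this
    set G' := insert (up, v) (insert (vp, u) (((C i).erase (up, u)).erase
      (vp, v))) with hG'
    have hif : (doLeafSwap C up u vp v i) i = G' := by
      simp [doLeafSwap, hG']
    -- numE preserved
    have e3 : G'.card = (C i).card := by
      have hm1 : (vp, v) ∈ (C i).erase (up, u) :=
        Finset.mem_erase.mpr ⟨by simp [hvu], hvpvm⟩
      have hm2 : (vp, u) ∉ ((C i).erase (up, u)).erase (vp, v) := by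
        intro hc
        rcases Finset.mem_erase.mp hc with ⟨-, hc2⟩
        rcases Finset.mem_erase.mp hc2 with ⟨hne, hc3⟩
        exact hne (by rw [inDeg_unique hdegu hc3 hupu])
      have hm3 : (up, v) ∉ insert (vp, u) (((C i).erase (up, u)).erase
          (vp, v)) := by
        intro hc
        rcases Finset.mem_insert.mp hc with hc1 | hc1
        · exact hvu (congrArg Prod.snd hc1)
        · rcases Finset.mem_erase.mp hc1 with ⟨hne, hc2⟩
          exact hne (by rw [inDeg_unique hdegv (Finset.mem_of_mem_erase hc2)
            hvpvm])
      rw [hG', Finset.card_insert_of_notMem hm3,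
        Finset.card_insert_of_notMem hm2,
        Finset.card_erase_of_mem hm1, Finset.card_erase_of_mem hupu]
      have : 2 ≤ (C i).card := by
        have h1 : ({(up, u), (vp, v)} : Finset (ℕ × ℕ)) ⊆ C i := by
          intro x hx
          rcases Finset.mem_insert.mp hx with h | h
          · exact h ▸ hupu
          · exact (Finset.mem_singleton.mp h) ▸ hvpvm
        have h2 : ({(up, u), (vp, v)} : Finset (ℕ × ℕ)).card = 2 := by
          rw [Finset.card_insert_of_notMem (by simp [hvu.symm]), Finset.card_singleton]
        calc 2 = ({(up, u), (vp, v)} : Finset (ℕ × ℕ)).card := h2.symm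
          _ ≤ (C i).card := Finset.card_le_card h1
      omega
    have hnumE : numE M (doLeafSwap C up u vp v i) = numE M C := by
      have e1 : ∑ l ∈ R M, ((doLeafSwap C up u vp v i) l).card
          = ∑ l ∈ (R M).erase i, (C l).card
            + ((doLeafSwap C up u vp v i) i).card :=
        sum_congr_except hi _ _ (fun l _ hne => by simp [doLeafSwap, hne])
      have e2 : ∑ l ∈ R M, (C l).card
          = ∑ l ∈ (R M).erase i, (C l).card + (C i).card :=
        sum_congr_except hi _ _ (fun l _ _ => rfl)
      rw [numE, numE, e1, e2, hif, e3]
    right; left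
    refine ⟨hnumE, ?_⟩
    -- pointwise bound for w ≠ v
    have hpt : ∀ w, w ≠ v → depth G' i w ≤ depth (C i) i w := fun w hw =>
      leafswap_ptwise hupu hvpvm hodv hdegv hvne hdvu hw
    -- edges present in G'
    have hvpuG' : (vp, u) ∈ G' :=
      Finset.mem_insert_of_mem (Finset.mem_insert_self _ _)
    have hupvG' : (up, v) ∈ G' := Finset.mem_insert_self _ _
    have hucG' : (u, c) ∈ G' := by
      apply Finset.mem_insert_of_mem
      apply Finset.mem_insert_of_mem
      exact Finset.mem_erase.mpr ⟨by simp [hcv],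
        Finset.mem_erase.mpr ⟨by simp [hcu], hedgec⟩⟩
    -- special depth bounds
    have hd'u : depth G' i u ≤ (a : ℕ∞) := by
      calc depth G' i u ≤ depth G' i vp + 1 := depth_child_le hvpuG'
        _ ≤ depth (C i) i vp + 1 := add_le_add_left (hpt vp hvpv) 1
        _ = (a : ℕ∞) := by rw [← hLv, ha]
    have hd'c : depth G' i c ≤ ((a + 1 : ℕ) : ℕ∞) := by
      calc depth G' i c ≤ depth G' i u + 1 := depth_child_le hucG'
        _ ≤ (a : ℕ∞) + 1 := add_le_add_left hd'u 1
        _ = ((a + 1 : ℕ) : ℕ∞) := by push_cast; ring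
    have hd'v : depth G' i v ≤ depth (C i) i u := by
      calc depth G' i v ≤ depth G' i up + 1 := depth_child_le hupvG'
        _ ≤ depth (C i) i up + 1 := add_le_add_left (hpt up hupv) 1
        _ = depth (C i) i u := hLu.symm
    -- Tm bounds
    have hTu' : Tm N G' i u ≤ a := Tm_le hd'u
    have hTc' : Tm N G' i c ≤ a + 1 := Tm_le hd'c
    have hTv' : Tm N G' i v ≤ Tm N (C i) i u := Tm_mono2 hd'v
    have hTv : Tm N (C i) i v = a := by
      rw [Tm, ha]
      rw [min_eq_left (by exact_mod_cast (by omega : a ≤ N))]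
      simp
    have hTc : a + 2 ≤ Tm N (C i) i c := by
      apply le_Tm _ haN
      rw [hLc, hLu]
      have h1 : ((a : ℕ∞)) + 1 ≤ depth (C i) i up + 1 := by
        rw [← hLu]
        exact (ENat.add_one_le_iff (by simp)).mpr (ha ▸ hdvu)
      calc ((a + 2 : ℕ) : ℕ∞) = ((a : ℕ∞) + 1) + 1 := by push_cast; ring
        _ ≤ (depth (C i) i up + 1) + 1 := add_le_add_left h1 1
    -- sum over the colour i
    have hYi : ∑ w ∈ V N, Tm N G' i w + 1 ≤ ∑ w ∈ V N, Tm N (C i) i w := by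
      set t : Finset ℕ := {u, v, c} with ht
      have htsub : t ⊆ V N := by
        intro x hx
        rcases Finset.mem_insert.mp hx with h | h
        · exact h ▸ huV
        rcases Finset.mem_insert.mp h with h | h
        · exact h ▸ hvV
        · exact (Finset.mem_singleton.mp h) ▸ hcV
      have hsum : ∀ (f : ℕ → ℕ), ∑ w ∈ t, f w = f u + f v + f c := by
        intro f
        rw [ht, Finset.sum_insert (by simp [hvu.symm, hcu.symm]),
          Finset.sum_insert (by simp [hcv.symm]), Finset.sum_singleton]
        ring
      have hsd : ∀ w ∈ V N \ t, w ≠ v := by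
        intro w hw
        rcases Finset.mem_sdiff.mp hw with ⟨-, hnt⟩
        intro hcon
        exact hnt (by rw [hcon, ht]; simp)
      have h1 : ∑ w ∈ V N \ t, Tm N G' i w ≤ ∑ w ∈ V N \ t, Tm N (C i) i w :=
        Finset.sum_le_sum fun w hw => Tm_mono (hpt w (hsd w hw))
      have h2 : ∑ w ∈ t, Tm N G' i w + 1 ≤ ∑ w ∈ t, Tm N (C i) i w := by
        rw [hsum, hsum]
        omega
      rw [← Finset.sum_sdiff htsub, ← Finset.sum_sdiff htsub]
      omega
    have y1 : Yval N M (doLeafSwap C up u vp v i)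
        = ∑ l ∈ (R M).erase i, (∑ w ∈ V N, Tm N (C l) l w) +
          ∑ w ∈ V N, Tm N G' i w := by
      rw [Yval_eq]
      have hcast := sum_congr_except hi
        (fun l => ∑ w ∈ V N, Tm N ((doLeafSwap C up u vp v i) l) l w)
        (fun l => ∑ w ∈ V N, Tm N (C l) l w)
        (fun l _ hne => by simp [doLeafSwap, hne])
      rw [hcast, hif]
    have y2 : Yval N M C
        = ∑ l ∈ (R M).erase i, (∑ w ∈ V N, Tm N (C l) l w) +
          ∑ w ∈ V N, Tm N (C i) i w := by
      rw [Yval_eq]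
      exact sum_congr_except hi _ _ (fun l _ _ => rfl)
    rw [y1, y2]
    omega
  -- MixSwap
  · subst hC'
    obtain ⟨hi, hj, hij, huv, hui, hvj, hucv, hvcu, hdiv, hdju, hdisj⟩ := happ
    have hiV : i ∈ V N := R_subset_V hMN hi
    have hjV : j ∈ V N := R_subset_V hMN hj
    have huV : u ∈ V N := (hvalid i hi _ hui).1
    have hucV : uc ∈ V N := (hvalid i hi _ hui).2.1
    have hvV : v ∈ V N := (hvalid j hj _ hvj).1
    have hvcV : vc ∈ V N := (hvalid j hj _ hvj).2.1
    have hsndi : ∀ e ∈ C i, e.2 ∈ V N := fun e he => (hvalid i hi e he).2.1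
    have hsndj : ∀ e ∈ C j, e.2 ∈ V N := fun e he => (hvalid j hj e he).2.1
    have huci : uc ≠ i := snd_ne_root (hroot i hi) hui
    have hvcj : vc ≠ j := snd_ne_root (hroot j hj) hvj
    have hdeguc : inDeg (C i) uc ≤ 1 := hdeg1 i hi uc hucV
    have hdegvc : inDeg (C j) vc ≤ 1 := hdeg1 j hj vc hvcV
    have hLuc : depth (C i) i uc = depth (C i) i u + 1 :=
      depth_parent hdeguc hui huci
    have hLvc : depth (C j) j vc = depth (C j) j v + 1 :=
      depth_parent hdegvc hvj hvcj
    have hqi : depth (C i) i v + 1 ≤ depth (C i) i uc := by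
      rw [hLuc]
      exact add_le_add_left hdiv 1
    have hqj : depth (C j) j u + 1 ≤ depth (C j) j vc := by
      rw [hLvc]
      exact add_le_add_left hdju 1
    have hvuc : (v, uc) ∉ C i := by
      intro hc
      exact huv (inDeg_unique hdeguc hui hc)
    have huvc : (u, vc) ∉ C j := by
      intro hc
      exact huv (inDeg_unique hdegvc hc hvj)
    set Gi' := insert (v, uc) ((C i).erase (u, uc)) with hGi'
    set Gj' := insert (u, vc) ((C j).erase (v, vc)) with hGj'
    have hifi : (doMixSwap C u uc v vc i j) i = Gi' := by
      simp [doMixSwap, hGi']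
    have hifj : (doMixSwap C u uc v vc i j) j = Gj' := by
      simp [doMixSwap, hGj', hij.symm]
    -- numE preserved
    have ci : Gi'.card = (C i).card := by
      rw [hGi', Finset.card_insert_of_notMem
        (fun hc => hvuc (Finset.mem_of_mem_erase hc)),
        Finset.card_erase_of_mem hui]
      have : 0 < (C i).card := Finset.card_pos.mpr ⟨_, hui⟩
      omega
    have cj : Gj'.card = (C j).card := by
      rw [hGj', Finset.card_insert_of_notMem
        (fun hc => huvc (Finset.mem_of_mem_erase hc)),
        Finset.card_erase_of_mem hvj]
      have : 0 < (C j).card := Finset.card_pos.mpr ⟨_, hvj⟩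
      omega
    have hnumE : numE M (doMixSwap C u uc v vc i j) = numE M C := by
      have e1 : ∑ l ∈ R M, ((doMixSwap C u uc v vc i j) l).card
          = ∑ l ∈ ((R M).erase i).erase j, (C l).card
            + ((doMixSwap C u uc v vc i j) i).card
            + ((doMixSwap C u uc v vc i j) j).card :=
        sum_congr_except2 hi hj (Ne.symm hij) _ _
          (fun l _ hni hnj => by simp [doMixSwap, hni, hnj])
      have e2 : ∑ l ∈ R M, (C l).card
          = ∑ l ∈ ((R M).erase i).erase j, (C l).card + (C i).card
            + (C j).card :=
        sum_congr_except2 hi hj (Ne.symm hij) _ _ (fun l _ _ _ => rfl)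
      rw [numE, numE, e1, e2, hifi, hifj, ci, cj]
    -- decide between strict Y decrease and equality
    by_cases hstrict : depth (C i) i v < depth (C i) i u ∨
        depth (C j) j u < depth (C j) j v
    · right; left
      refine ⟨hnumE, ?_⟩
      have hYi_le : ∑ w ∈ V N, Tm N Gi' i w ≤ ∑ w ∈ V N, Tm N (C i) i w := by
        rw [hGi']
        exact Ycolor_le hqi hui
      have hYj_le : ∑ w ∈ V N, Tm N Gj' j w ≤ ∑ w ∈ V N, Tm N (C j) j w := by
        rw [hGj']
        exact Ycolor_le hqj hvj
      have hkey : ∑ w ∈ V N, Tm N Gi' i w + ∑ w ∈ V N, Tm N Gj' j w + 1 ≤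
          ∑ w ∈ V N, Tm N (C i) i w + ∑ w ∈ V N, Tm N (C j) j w := by
        rcases hstrict with hs | hs
        · have := Ycolor_lt (N := N) hui hdeguc huci hs hiV huV hucV hsndi
          rw [← hGi'] at this
          omega
        · have := Ycolor_lt (N := N) hvj hdegvc hvcj hs hjV hvV hvcV hsndj
          rw [← hGj'] at this
          omega
      have y1 : Yval N M (doMixSwap C u uc v vc i j)
          = ∑ l ∈ ((R M).erase i).erase j, (∑ w ∈ V N, Tm N (C l) l w) +
            ∑ w ∈ V N, Tm N Gi' i w + ∑ w ∈ V N, Tm N Gj' j w := by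
        rw [Yval_eq]
        have hcast := sum_congr_except2 hi hj (Ne.symm hij)
          (fun l => ∑ w ∈ V N, Tm N ((doMixSwap C u uc v vc i j) l) l w)
          (fun l => ∑ w ∈ V N, Tm N (C l) l w)
          (fun l _ hni hnj => by simp [doMixSwap, hni, hnj])
        rw [hcast, hifi, hifj]
      have y2 : Yval N M C
          = ∑ l ∈ ((R M).erase i).erase j, (∑ w ∈ V N, Tm N (C l) l w) +
            ∑ w ∈ V N, Tm N (C i) i w + ∑ w ∈ V N, Tm N (C j) j w := by
        rw [Yval_eq]
        exact sum_congr_except2 hi hj (Ne.symm hij) _ _ (fun l _ _ _ => rfl)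
      rw [y1, y2]
      omega
    · -- equality case
      push_neg at hstrict
      obtain ⟨h1, h2⟩ := hstrict
      have hdeqi : depth (C i) i v = depth (C i) i u :=
        le_antisymm hdiv h1
      have hdeqj : depth (C j) j u = depth (C j) j v :=
        le_antisymm hdju h2
      have hprod : ((u : ℤ) - (v : ℤ)) * ((j : ℤ) - (i : ℤ)) > 0 := by
        rcases hdisj with hne | hp
        · exfalso
          apply hne
          rw [hdeqi, hdeqj]
        · exact hp
      right; right
      refine ⟨hnumE, ?_, ?_⟩
      · -- Y preserved
        have hdi : ∀ w, depth Gi' i w = depth (C i) i w := by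
          intro w
          rw [hGi']
          exact depth_reparent_eq hui hvuc hdeguc huci hdeqi w
        have hdj : ∀ w, depth Gj' j w = depth (C j) j w := by
          intro w
          rw [hGj']
          exact depth_reparent_eq hvj huvc hdegvc hvcj hdeqj w
        rw [Yval_eq, Yval_eq]
        apply Finset.sum_congr rfl
        intro l hl
        by_cases hli : l = i
        · subst hli
          rw [hifi]
          exact Finset.sum_congr rfl fun w _ => by rw [Tm, Tm, hdi w]
        by_cases hlj : l = j
        · subst hlj
          rw [hifj]
          exact Finset.sum_congr rfl fun w _ => by rw [Tm, Tm, hdj w]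
        · simp [doMixSwap, hli, hlj]
      · -- S increases
        have hSineq : u * i + v * j + 1 ≤ u * j + v * i := by
          have hexp : ((u : ℤ) - (v : ℤ)) * ((j : ℤ) - (i : ℤ))
              = (u * j + v * i : ℤ) - (u * i + v * j : ℤ) := by ring
          rw [hexp] at hprod
          have : ((u * i + v * j : ℕ) : ℤ) < ((u * j + v * i : ℕ) : ℤ) := by
            push_cast
            omega
          exact_mod_cast this
        -- outdegree changes
        have hdiu : outDeg Gi' u + 1 = outDeg (C i) u := by
          rw [hGi', outDeg_insert_ne huv.symm, outDeg_erase_self hui]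
        have hdju' : outDeg Gj' u = outDeg (C j) u + 1 := by
          rw [hGj', outDeg_insert_self
            (fun hc => huvc (Finset.mem_of_mem_erase hc)),
            outDeg_erase_ne huv.symm]
        have hdjv : outDeg Gj' v + 1 = outDeg (C j) v := by
          rw [hGj', outDeg_insert_ne huv, outDeg_erase_self hvj]
        have hdiv' : outDeg Gi' v = outDeg (C i) v + 1 := by
          rw [hGi', outDeg_insert_self
            (fun hc => hvuc (Finset.mem_of_mem_erase hc)),
            outDeg_erase_ne huv]
        -- inner sums
        have hinneru : (∑ l ∈ R M, l * outDeg ((doMixSwap C u uc v vc i j) l) u)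
            + i = (∑ l ∈ R M, l * outDeg (C l) u) + j := by
          have e1 := sum_congr_except2 hi hj (Ne.symm hij)
            (fun l => l * outDeg ((doMixSwap C u uc v vc i j) l) u)
            (fun l => l * outDeg (C l) u)
            (fun l _ hni hnj => by simp [doMixSwap, hni, hnj])
          have e2 := sum_congr_except2 hi hj (Ne.symm hij)
            (fun l => l * outDeg (C l) u) (fun l => l * outDeg (C l) u)
            (fun l _ _ _ => rfl)
          rw [hifi, hifj] at e1
          have m1 : i * outDeg (C i) u = i * outDeg Gi' u + i := by
            rw [← hdiu, Nat.mul_add, Nat.mul_one]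
          have m2 : j * outDeg Gj' u = j * outDeg (C j) u + j := by
            rw [hdju', Nat.mul_add, Nat.mul_one]
          omega
        have hinnerv : (∑ l ∈ R M, l * outDeg ((doMixSwap C u uc v vc i j) l) v)
            + j = (∑ l ∈ R M, l * outDeg (C l) v) + i := by
          have e1 := sum_congr_except2 hi hj (Ne.symm hij)
            (fun l => l * outDeg ((doMixSwap C u uc v vc i j) l) v)
            (fun l => l * outDeg (C l) v)
            (fun l _ hni hnj => by simp [doMixSwap, hni, hnj])
          have e2 := sum_congr_except2 hi hj (Ne.symm hij)
            (fun l => l * outDeg (C l) v) (fun l => l * outDeg (C l) v)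
            (fun l _ _ _ => rfl)
          rw [hifi, hifj] at e1
          have m1 : j * outDeg (C j) v = j * outDeg Gj' v + j := by
            rw [← hdjv, Nat.mul_add, Nat.mul_one]
          have m2 : i * outDeg Gi' v = i * outDeg (C i) v + i := by
            rw [hdiv', Nat.mul_add, Nat.mul_one]
          omega
        -- assemble S
        have s1 := sum_congr_except2 (s := V N) huV hvV huv.symm
          (fun w => w * ∑ l ∈ R M, l * outDeg ((doMixSwap C u uc v vc i j) l) w)
          (fun w => w * ∑ l ∈ R M, l * outDeg (C l) w)
          (fun w _ hnu hnv => by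
            congr 1
            apply Finset.sum_congr rfl
            intro l hl
            congr 1
            by_cases hli : l = i
            · subst hli
              rw [hifi, hGi', outDeg_insert_ne (Ne.symm hnv),
                outDeg_erase_ne (Ne.symm hnu)]
            by_cases hlj : l = j
            · subst hlj
              rw [hifj, hGj', outDeg_insert_ne (Ne.symm hnu),
                outDeg_erase_ne (Ne.symm hnv)]
            · simp [doMixSwap, hli, hlj])
        have s2 := sum_congr_except2 (s := V N) huV hvV huv.symm
          (fun w => w * ∑ l ∈ R M, l * outDeg (C l) w)
          (fun w => w * ∑ l ∈ R M, l * outDeg (C l) w)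
          (fun w _ _ _ => rfl)
        have mu : u * (∑ l ∈ R M, l * outDeg ((doMixSwap C u uc v vc i j) l) u)
            + u * i = u * (∑ l ∈ R M, l * outDeg (C l) u) + u * j := by
          rw [← Nat.mul_add, ← Nat.mul_add, hinneru]
        have mv : v * (∑ l ∈ R M, l * outDeg ((doMixSwap C u uc v vc i j) l) v)
            + v * j = v * (∑ l ∈ R M, l * outDeg (C l) v) + v * i := by
          rw [← Nat.mul_add, ← Nat.mul_add, hinnerv]
        rw [Sval, Sval, s1, s2]
        omega

end P2P
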